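/- Let κ be a GLC and let x, x̂ ∈ ℝ^{n_x}. Define D(x) = {j ∈ {1,…,n_c} : B(z*(x̂), κ‖x − x̂‖) ⊆ Z_j(x)} and the trimming index set I(x) = A(x̂) ∪ ({1,…,n_c} \ D(x)). Then the trimmed problem over Z(x, I(x)) has the same optimal solution as the original mp-QP: z*(x, I(x)) = z*(x). -/

import Mathlib

private theorem dot_lin {n : ℕ} (v p d : Fin n → ℝ) (t : ℝ) :
    dotProduct v (p + t • d)
      = dotProduct v p + t * dotProduct v d := by
  simp [dotProduct_add, dotProduct_smul]

private theorem dot_sub {n : ℕ} (v p q : Fin n → ℝ) :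
    dotProduct v (p - q)
      = dotProduct v p - dotProduct v q := by
  simp [dotProduct_sub]

private theorem Vconv {nx n : ℕ} (H : Matrix (Fin n) (Fin n) ℝ) (hH : H.PosDef)
    (F : Matrix (Fin nx) (Fin n) ℝ) (y : Fin nx → ℝ)
    (p d : Fin n → ℝ) (t : ℝ) (ht0 : 0 ≤ t) (ht1 : t ≤ 1) :
    (1/2) * dotProduct (p + t • d) (H.mulVec (p + t • d))
        + dotProduct y (F.mulVec (p + t • d))
      ≤ ((1/2) * dotProduct p (H.mulVec p) + dotProduct y (F.mulVec p))
        + t * (((1/2) * dotProduct (p + d) (H.mulVec (p + d))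
            + dotProduct y (F.mulVec (p + d)))
          - ((1/2) * dotProduct p (H.mulVec p) + dotProduct y (F.mulVec p))) := by
  have hdd : 0 ≤ dotProduct d (H.mulVec d) := by
    simpa using hH.posSemidef.dotProduct_mulVec_nonneg d
  have hsymm : dotProduct p (H.mulVec d) = dotProduct d (H.mulVec p) := by
    rw [Matrix.dotProduct_mulVec, ← Matrix.mulVec_transpose]
    rw [show H.transpose = H from by simpa [Matrix.conjTranspose, Matrix.IsSymm] using hH.1]
    exact dotProduct_comm _ _
  simp only [Matrix.mulVec_add, Matrix.mulVec_smul, dotProduct_add,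
    add_dotProduct, dotProduct_smul, smul_dotProduct, smul_eq_mul]
  nlinarith [mul_nonneg (mul_nonneg ht0 (sub_nonneg.2 ht1)) hdd]

/-- Theorem 1: with `I(x) = A(x̂) ∪ ({1,…,n_c} \\ D(x))`, where
`D(x) = {j : B(z*(x̂), κ‖x−x̂‖) ⊆ Z_j(x)}`, the trimmed mp-QP has the same optimal
solution as the original one. -/
theorem trimmed_mpQP_algorithm1_optimal
    (n_x n_z n_c : ℕ) (hnx : 0 < n_x) (hnz : 0 < n_z) (hnc : 0 < n_c)
    (H : Matrix (Fin n_z) (Fin n_z) ℝ) (hH : H.PosDef)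
    (F : Matrix (Fin n_x) (Fin n_z) ℝ)
    (G : Matrix (Fin n_c) (Fin n_z) ℝ)
    (S : Matrix (Fin n_c) (Fin n_x) ℝ)
    (w : Fin n_c → ℝ)
    (V : EuclideanSpace ℝ (Fin n_x) → EuclideanSpace ℝ (Fin n_z) → ℝ)
    (hV : ∀ x z, V x z = (1 / 2) * dotProduct (WithLp.ofLp z) (H.mulVec (WithLp.ofLp z))
      + dotProduct (WithLp.ofLp x) (F.mulVec (WithLp.ofLp z)))
    (Z : EuclideanSpace ℝ (Fin n_x) → Set (Fin n_c) → Set (EuclideanSpace ℝ (Fin n_z)))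
    (hZ : ∀ x I, Z x I =
      {z | ∀ j ∈ I, dotProduct (G j) (WithLp.ofLp z) ≤ dotProduct (S j) (WithLp.ofLp x) + w j})
    (hfeas : ∀ x, (Z x Set.univ).Nonempty)
    (zstar : EuclideanSpace ℝ (Fin n_x) → Set (Fin n_c) → EuclideanSpace ℝ (Fin n_z))
    (hmem : ∀ x I, zstar x I ∈ Z x I)
    (hopt : ∀ x I, ∀ z ∈ Z x I, V x (zstar x I) ≤ V x z)
    (huniq : ∀ x I, ∀ z ∈ Z x I, (∀ z' ∈ Z x I, V x z ≤ V x z') → z = zstar x I)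
    (κ : ℝ) (hκ0 : 0 ≤ κ)
    (hGLC : ∀ (x₁ x₂ : EuclideanSpace ℝ (Fin n_x)) (I : Set (Fin n_c)),
      ‖zstar x₁ I - zstar x₂ I‖ ≤ κ * ‖x₁ - x₂‖)
    (x xh : EuclideanSpace ℝ (Fin n_x)) :
    zstar x
      ({j | dotProduct (G j) (WithLp.ofLp (zstar xh Set.univ))
          = dotProduct (S j) (WithLp.ofLp xh) + w j} ∪
        {j | Metric.closedBall (zstar xh Set.univ) (κ * ‖x - xh‖) ⊆
          {z : EuclideanSpace ℝ (Fin n_z) |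
            dotProduct (G j) (WithLp.ofLp z) ≤ dotProduct (S j) (WithLp.ofLp x) + w j}}ᶜ)
      = zstar x Set.univ := by
  set a := zstar xh Set.univ with ha
  set I : Set (Fin n_c) :=
    ({j | dotProduct (G j) (WithLp.ofLp a) = dotProduct (S j) (WithLp.ofLp xh) + w j} ∪
      {j | Metric.closedBall a (κ * ‖x - xh‖) ⊆
        {z : EuclideanSpace ℝ (Fin n_z) |
          dotProduct (G j) (WithLp.ofLp z) ≤ dotProduct (S j) (WithLp.ofLp x) + w j}}ᶜ) with hIdef
  -- Z y univ ⊆ Z y I'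
  have hsub : ∀ (y : EuclideanSpace ℝ (Fin n_x)) (I' : Set (Fin n_c)),
      Z y Set.univ ⊆ Z y I' := by
    intro y I'
    rw [hZ, hZ]
    intro z hz j _
    exact hz j (Set.mem_univ j)
  -- characterize j ∉ I
  have hnotI : ∀ j, j ∉ I →
      (dotProduct (G j) (WithLp.ofLp a) ≠ dotProduct (S j) (WithLp.ofLp xh) + w j) ∧
      (Metric.closedBall a (κ * ‖x - xh‖) ⊆
        {z : EuclideanSpace ℝ (Fin n_z) |
          dotProduct (G j) (WithLp.ofLp z) ≤ dotProduct (S j) (WithLp.ofLp x) + w j}) := by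
    intro j hj
    rw [hIdef] at hj
    simp only [Set.mem_union, Set.mem_compl_iff, Set.mem_setOf_eq, not_or, not_not] at hj
    exact hj
  -- Step 1: a is also optimal over Z xh I
  have key1 : ∀ z' ∈ Z xh I, V xh a ≤ V xh z' := by
    intro z' hz'
    by_contra hlt
    push_neg at hlt
    set d : EuclideanSpace ℝ (Fin n_z) := z' - a with hd
    have had : a + d = z' := by rw [hd]; abel
    -- strictly inactive constraints for j ∉ I at a
    have hstrict : ∀ j, j ∉ I →
        dotProduct (G j) (WithLp.ofLp a) < dotProduct (S j) (WithLp.ofLp xh) + w j := by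
      intro j hj
      have h1 := (hnotI j hj).1
      have h2 : a ∈ Z xh Set.univ := hmem xh Set.univ
      rw [hZ] at h2
      exact lt_of_le_of_ne (h2 j (Set.mem_univ j)) h1
    -- eventually (in 𝓝 0) all dropped constraints hold for a + t • d
    have hev : ∀ j : Fin n_c, ∀ᶠ t : ℝ in nhds 0, j ∉ I →
        dotProduct (G j) (WithLp.ofLp a) + t * dotProduct (G j) (WithLp.ofLp d)
          ≤ dotProduct (S j) (WithLp.ofLp xh) + w j := by
      intro j
      by_cases hj : j ∈ I
      · exact Filter.Eventually.of_forall (fun t h => absurd hj h)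
      · have hlt' := hstrict j hj
        have htend : Filter.Tendsto
            (fun t : ℝ => dotProduct (G j) (WithLp.ofLp a) + t * dotProduct (G j) (WithLp.ofLp d))
            (nhds 0) (nhds (dotProduct (G j) (WithLp.ofLp a))) := by
          have : Filter.Tendsto (fun t : ℝ => t * dotProduct (G j) (WithLp.ofLp d))
              (nhds 0) (nhds 0) := by
            simpa using ((continuous_mul_const (dotProduct (G j) (WithLp.ofLp d))).tendsto (0:ℝ))
          simpa using tendsto_const_nhds.add this
        filter_upwards [htend.eventually_lt_const hlt'] with t ht _
        exact le_of_lt ht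
    have hev1 : ∀ᶠ t : ℝ in nhds 0, t < 1 := by
      filter_upwards [Metric.ball_mem_nhds (0:ℝ) zero_lt_one] with t ht
      have := abs_lt.1 (by simpa [Real.dist_eq] using ht)
      linarith [this.2]
    have hevall : ∀ᶠ t : ℝ in nhdsWithin 0 (Set.Ioi 0),
        ((∀ j, j ∉ I → dotProduct (G j) (WithLp.ofLp a) + t * dotProduct (G j) (WithLp.ofLp d)
          ≤ dotProduct (S j) (WithLp.ofLp xh) + w j) ∧ t < 1) ∧ 0 < t := by
      refine Filter.Eventually.and ?_ ?_
      · exact Filter.Eventually.filter_mono nhdsWithin_le_nhds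
          ((Filter.eventually_all.mpr hev).and hev1)
      · exact eventually_mem_nhdsWithin
    obtain ⟨t, ⟨hconstr, ht1⟩, ht0⟩ := hevall.exists
    have ht0' : 0 ≤ t := le_of_lt ht0
    have ht1' : t ≤ 1 := le_of_lt ht1
    -- the perturbed point is feasible for the full problem
    have hzt : a + t • d ∈ Z xh Set.univ := by
      rw [hZ]
      intro j _
      rw [show dotProduct (G j) (WithLp.ofLp (a + t • d))
          = dotProduct (G j) (WithLp.ofLp a) + t * dotProduct (G j) (WithLp.ofLp d) from
        dot_lin (G j) (WithLp.ofLp a) (WithLp.ofLp d) t]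
      by_cases hj : j ∈ I
      · have h2 : a ∈ Z xh Set.univ := hmem xh Set.univ
        rw [hZ] at h2
        have ha' := h2 j (Set.mem_univ j)
        rw [hZ] at hz'
        have hz'j := hz' j hj
        have hdj : dotProduct (G j) (WithLp.ofLp d)
            = dotProduct (G j) (WithLp.ofLp z') - dotProduct (G j) (WithLp.ofLp a) := by
          rw [hd]; exact dot_sub (G j) (WithLp.ofLp z') (WithLp.ofLp a)
        rw [hdj]
        nlinarith
      · exact hconstr j hj
    -- value decreases, contradiction
    have hVle : V xh (a + t • d) ≤ V xh a + t * (V xh z' - V xh a) := by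
      rw [← had, hV, hV, hV]
      exact Vconv H hH F (WithLp.ofLp xh) (WithLp.ofLp a) (WithLp.ofLp d) t ht0' ht1'
    have : V xh (a + t • d) < V xh a := by nlinarith
    exact absurd (hopt xh Set.univ _ hzt) (not_le.2 this)
  have h1 : zstar xh I = a :=
    (huniq xh I a (hsub xh I (hmem xh Set.univ)) key1).symm
  -- Step 2: zstar x I is feasible for the full problem at x
  have h2 : zstar x I ∈ Z x Set.univ := by
    rw [hZ]
    intro j _
    by_cases hj : j ∈ I
    · have := hmem x I
      rw [hZ] at this
      exact this j hj
    · have hball := (hnotI j hj).2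
      have hdist : zstar x I ∈ Metric.closedBall a (κ * ‖x - xh‖) := by
        rw [Metric.mem_closedBall, dist_eq_norm, ← h1]
        exact hGLC x xh I
      exact hball hdist
  -- Step 3: conclude
  have key2 : ∀ z' ∈ Z x I, V x (zstar x Set.univ) ≤ V x z' :=
    fun z' hz' => le_trans (hopt x Set.univ _ h2) (hopt x I z' hz')
  exact (huniq x I (zstar x Set.univ) (hsub x I (hmem x Set.univ)) key2).symm
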